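/- Suppose G = K_{2,l} and G' = K_{2,l+1}. If L is a balanced m-assignment for G with m ≥ 3 such that P(G,L) < P(G,m), and there is an ε ∈ (0,2) such that ⌊l/4⌋ > max{ ln(ε/(2(m−2))) / (2·ln((m−2)/(m−1))), ln((2−ε)/4) / ln(1 − 1/(m−1)²) }, then there is a balanced m-assignment L' for G' such that P(G',L') < P(G',m). -/

import Mathlib

/-- A proper coloring of the graph `G` from the list assignment `L` (colors are
natural numbers): every vertex gets a color from its list, and adjacent vertices
get different colors. -/
def IsProperListColoring {V : Type*} (G : SimpleGraph V) (L : V → Finset ℕ) (f : V → ℕ) : Prop :=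
  (∀ v, f v ∈ L v) ∧ ∀ ⦃u w⦄, G.Adj u w → f u ≠ f w

/-- `P(G, L)`: the number of proper `L`-colorings of `G`. -/
noncomputable def numListColorings {V : Type*} (G : SimpleGraph V) (L : V → Finset ℕ) : ℕ :=
  {f : V → ℕ | IsProperListColoring G L f}.ncard

/-- `P(G, m)`: the chromatic polynomial of `G` evaluated at `m`, i.e. the number of
proper colorings of `G` using colors from `{1, …, m}`. -/
noncomputable def chromPoly {V : Type*} (G : SimpleGraph V) (m : ℕ) : ℕ :=
  numListColorings G fun _ => Finset.Icc 1 m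

/-- `L` is an `m`-assignment: every list has size `m`. -/
def IsAssignment {V : Type*} (L : V → Finset ℕ) (m : ℕ) : Prop :=
  ∀ v, (L v).card = m

/-- `P_ℓ(G, m)`: the list color function, the minimum of `P(G, L)` over all
`m`-assignments `L` for `G`. -/
noncomputable def listColorFunction {V : Type*} (G : SimpleGraph V) (m : ℕ) : ℕ :=
  sInf {p | ∃ L : V → Finset ℕ, IsAssignment L m ∧ numListColorings G L = p}

/-- `χ(G)`: the chromatic number, the least `m` admitting a proper coloring with
colors from `{1, …, m}`. -/
noncomputable def chromNum {V : Type*} (G : SimpleGraph V) : ℕ :=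
  sInf {m | 0 < chromPoly G m}

/-- `χ_ℓ(G)`: the list chromatic number, the least `k` such that `G` has a proper
`L`-coloring for every `k`-assignment `L`. -/
noncomputable def listChromNum {V : Type*} (G : SimpleGraph V) : ℕ :=
  sInf {k | ∀ L : V → Finset ℕ, IsAssignment L k → ∃ f, IsProperListColoring G L f}

/-- `τ(G)`: the list color function threshold, the least `k ≥ χ(G)` such that
`P_ℓ(G, m) = P(G, m)` whenever `m ≥ k`. -/
noncomputable def lcfThreshold {V : Type*} (G : SimpleGraph V) : ℕ :=
  sInf {k | chromNum G ≤ k ∧ ∀ m, k ≤ m → listColorFunction G m = chromPoly G m}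

/-- The complete bipartite graph `K_{2,l}`. -/
def K2l (l : ℕ) : SimpleGraph (Fin 2 ⊕ Fin l) := completeBipartiteGraph (Fin 2) (Fin l)

/-- The four possible lists on the `y`-vertices in a balanced `m`-assignment. -/
def balSet (m : ℕ) : Fin 4 → Finset ℕ :=
  ![Finset.Icc 1 (m - 2) ∪ {m - 1, m + 1}, Finset.Icc 1 (m - 2) ∪ {m - 1, m + 2},
    Finset.Icc 1 (m - 2) ∪ {m, m + 1}, Finset.Icc 1 (m - 2) ∪ {m, m + 2}]

/-- `z_{i+1}`: the number of `y`-vertices of `K_{2,l}` whose list is `balSet m i`. -/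
def zCount {l : ℕ} (L : Fin 2 ⊕ Fin l → Finset ℕ) (m : ℕ) (i : Fin 4) : ℕ :=
  (Finset.univ.filter fun j : Fin l => L (Sum.inr j) = balSet m i).card

/-- A balanced `m`-assignment for `K_{2,l}`: an `m`-assignment with
`L(x_1) = [m]`, `L(x_2) = [m-2] ∪ {m+1, m+2}`, `z_1 + z_2 + z_3 + z_4 = l`,
and `|z_i - z_j| ≤ 1` for all `i, j ∈ [4]`. -/
def IsBalanced {l : ℕ} (m : ℕ) (L : Fin 2 ⊕ Fin l → Finset ℕ) : Prop :=
  IsAssignment L m ∧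
  L (Sum.inl 0) = Finset.Icc 1 m ∧
  L (Sum.inl 1) = Finset.Icc 1 (m - 2) ∪ {m + 1, m + 2} ∧
  (∑ i : Fin 4, zCount L m i) = l ∧
  ∀ i j : Fin 4, |(zCount L m i : ℤ) - (zCount L m j : ℤ)| ≤ 1

open Finset

lemma master (n : ℕ) (L : Fin 2 ⊕ Fin n → Finset ℕ) :
    numListColorings (K2l n) L =
      ∑ c1 ∈ L (Sum.inl 0), ∑ c2 ∈ L (Sum.inl 1),
        ∏ j : Fin n, ((L (Sum.inr j)) \ {c1, c2}).card := by
  classical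
  set F : Finset ((Fin 2 ⊕ Fin n) → ℕ) :=
    (Fintype.piFinset (fun v => L v)).filter
      (fun f => ∀ i j, f (Sum.inl i) ≠ f (Sum.inr j)) with hF
  have hset : {f : (Fin 2 ⊕ Fin n) → ℕ | IsProperListColoring (K2l n) L f} = ↑F := by
    ext f
    simp only [Set.mem_setOf_eq, hF, coe_filter, Fintype.mem_piFinset, Set.mem_setOf_eq,
      IsProperListColoring]
    constructor
    · rintro ⟨h1, h2⟩
      exact ⟨h1, fun i j => h2 (by simp [K2l])⟩
    · rintro ⟨h1, h2⟩
      refine ⟨h1, ?_⟩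
      rintro (i | j) (i' | j') hadj
      · simp [K2l] at hadj
      · exact h2 i j'
      · exact fun h => (h2 i' j h.symm).elim
      · simp [K2l] at hadj
  rw [numListColorings, hset, Set.ncard_coe_finset]
  set T : Finset ((_ : ℕ × ℕ) × (Fin n → ℕ)) :=
    ((L (Sum.inl 0)) ×ˢ (L (Sum.inl 1))).sigma
      (fun p => Fintype.piFinset (fun j => L (Sum.inr j) \ {p.1, p.2})) with hT
  have hcard : F.card = T.card := by
    refine Finset.card_bij'
      (fun f _ => ⟨(f (Sum.inl 0), f (Sum.inl 1)), fun j => f (Sum.inr j)⟩)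
      (fun x _ => Sum.elim (fun i => if i = 0 then x.1.1 else x.1.2) x.2)
      ?hi ?hj ?linv ?rinv
    case hi =>
      intro f hf
      rw [hF, mem_filter, Fintype.mem_piFinset] at hf
      rw [hT, mem_sigma, mem_product]
      refine ⟨⟨hf.1 _, hf.1 _⟩, ?_⟩
      rw [Fintype.mem_piFinset]
      intro j
      rw [mem_sdiff]
      refine ⟨hf.1 _, ?_⟩
      simp only [mem_insert, mem_singleton]
      push_neg
      exact ⟨fun h => hf.2 0 j h.symm, fun h => hf.2 1 j h.symm⟩
    case hj =>
      intro x hx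
      rw [hT, mem_sigma, mem_product] at hx
      obtain ⟨⟨h1, h2⟩, h3⟩ := hx
      rw [Fintype.mem_piFinset] at h3
      rw [hF, mem_filter, Fintype.mem_piFinset]
      constructor
      · rintro (i | j)
        · fin_cases i
          · simpa using h1
          · simpa using h2
        · exact (mem_sdiff.mp (h3 j)).1
      · intro i j
        have hne := (mem_sdiff.mp (h3 j)).2
        simp only [mem_insert, mem_singleton] at hne
        push_neg at hne
        fin_cases i
        · simpa using fun h => hne.1 h.symm
        · simpa using fun h => hne.2 h.symm
    case linv =>
      intro f hf
      funext v
      rcases v with i | j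
      · fin_cases i <;> simp
      · rfl
    case rinv =>
      intro x hx
      rfl
  rw [hcard, hT, Finset.card_sigma, Finset.sum_product]
  refine Finset.sum_congr rfl fun c1 _ => Finset.sum_congr rfl fun c2 _ => ?_
  rw [Fintype.card_piFinset]

lemma mem_balSet_iff (m x : ℕ) (i : Fin 4) : x ∈ balSet m i ↔
    (1 ≤ x ∧ x ≤ m - 2) ∨ x = ![m-1,m-1,m,m] i ∨ x = ![m+1,m+2,m+1,m+2] i := by
  fin_cases i <;>
    simp [balSet, Finset.mem_union, Finset.mem_insert, Finset.mem_singleton, Finset.mem_Icc] <;> tauto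

lemma card_balSet (m : ℕ) (hm : 3 ≤ m) (i : Fin 4) : (balSet m i).card = m := by
  have key : ∀ u v : ℕ, m - 2 < u → m - 2 < v → u ≠ v →
      (Finset.Icc 1 (m-2) ∪ {u, v}).card = m := by
    intro u v hu hv huv
    rw [Finset.card_union_of_disjoint, Nat.card_Icc, Finset.card_pair huv]
    · omega
    · simp only [Finset.disjoint_left, Finset.mem_Icc, Finset.mem_insert, Finset.mem_singleton]
      omega
  fin_cases i <;> simp only [balSet, Matrix.cons_val_zero, Matrix.cons_val_one, Matrix.head_cons,
    Matrix.cons_val_two, Matrix.tail_cons, Matrix.cons_val_three] <;>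
    apply key <;> omega

lemma balSet_inj (m : ℕ) (hm : 3 ≤ m) {i j : Fin 4} (h : balSet m i = balSet m j) : i = j := by
  have h1 := mem_balSet_iff m m i
  have h2 := mem_balSet_iff m m j
  have h3 := mem_balSet_iff m (m+1) i
  have h4 := mem_balSet_iff m (m+1) j
  rw [h, h2] at h1
  rw [h, h4] at h3
  fin_cases i <;> fin_cases j <;> simp at h1 h3 ⊢ <;> omega

lemma covers {n m : ℕ} (hm : 3 ≤ m) (L : Fin 2 ⊕ Fin n → Finset ℕ)
    (hz : ∑ i : Fin 4, zCount L m i = n) (j : Fin n) : ∃ i, L (Sum.inr j) = balSet m i := by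
  classical
  by_contra hcon
  push_neg at hcon
  set F : Fin 4 → Finset (Fin n) :=
    fun i => Finset.univ.filter fun j : Fin n => L (Sum.inr j) = balSet m i with hF
  have hdisj : ∀ i ∈ (Finset.univ : Finset (Fin 4)), ∀ i' ∈ Finset.univ, i ≠ i' →
      Disjoint (F i) (F i') := by
    intro i _ i' _ hne
    rw [Finset.disjoint_left]
    intro a ha ha'
    rw [hF, mem_filter] at ha ha'
    exact hne (balSet_inj m hm (ha.2 ▸ ha'.2))
  have hcard : (Finset.univ.biUnion F).card = n := by
    rw [Finset.card_biUnion hdisj]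
    exact hz
  have hsub : Finset.univ.biUnion F ⊆ Finset.univ.erase j := by
    intro a ha
    rw [Finset.mem_biUnion] at ha
    obtain ⟨i, _, hai⟩ := ha
    rw [hF, mem_filter] at hai
    refine Finset.mem_erase.mpr ⟨?_, Finset.mem_univ a⟩
    rintro rfl
    exact hcon i hai.2
  have := Finset.card_le_card hsub
  rw [hcard, Finset.card_erase_of_mem (Finset.mem_univ j), Finset.card_univ,
    Fintype.card_fin] at this
  have hn := j.isLt
  omega

lemma grouped (n m : ℕ) (hm : 3 ≤ m) (L : Fin 2 ⊕ Fin n → Finset ℕ)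
    (h0 : L (Sum.inl 0) = Finset.Icc 1 m)
    (h1 : L (Sum.inl 1) = Finset.Icc 1 (m - 2) ∪ {m + 1, m + 2})
    (hz : ∑ i : Fin 4, zCount L m i = n) :
    numListColorings (K2l n) L =
      ∑ c1 ∈ Finset.Icc 1 m, ∑ c2 ∈ Finset.Icc 1 (m - 2) ∪ {m + 1, m + 2},
        ∏ i : Fin 4, (((balSet m i) \ {c1, c2}).card) ^ (zCount L m i) := by
  classical
  rw [master, h0, h1]
  refine Finset.sum_congr rfl fun c1 _ => Finset.sum_congr rfl fun c2 _ => ?_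
  choose τ hτ using covers hm L hz
  have hfib : ∀ i : Fin 4,
      (Finset.univ.filter fun j : Fin n => L (Sum.inr j) = balSet m i) =
      (Finset.univ.filter fun j : Fin n => τ j = i) := by
    intro i
    apply Finset.filter_congr
    intro j _
    constructor
    · intro h; exact balSet_inj m hm ((hτ j).symm.trans h)
    · rintro rfl; exact hτ j
  calc ∏ j : Fin n, ((L (Sum.inr j)) \ {c1, c2}).card
      = ∏ j : Fin n, ((balSet m (τ j)) \ {c1, c2}).card := by
        refine Finset.prod_congr rfl fun j _ => by rw [hτ j]
    _ = ∏ i : Fin 4, ∏ j ∈ Finset.univ.filter fun j : Fin n => τ j = i,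
          ((balSet m i) \ {c1, c2}).card := by
        rw [Finset.prod_fiberwise' Finset.univ τ (fun i => ((balSet m i) \ {c1, c2}).card)]
    _ = ∏ i : Fin 4, (((balSet m i) \ {c1, c2}).card) ^ (zCount L m i) := by
        refine Finset.prod_congr rfl fun i _ => ?_
        rw [Finset.prod_const, zCount, hfib i]

lemma card_sdiff_pair (S : Finset ℕ) (u v : ℕ) (hne : u ≠ v) :
    (S \ {u,v}).card = S.card - (if u ∈ S then 1 else 0) - (if v ∈ S then 1 else 0) := by
  classical
  have hE : S \ {u,v} = (S.erase u).erase v := by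
    ext x
    simp only [Finset.mem_sdiff, Finset.mem_insert, Finset.mem_singleton, Finset.mem_erase]
    tauto
  rw [hE]
  by_cases hu : u ∈ S <;> by_cases hv : v ∈ S
  · rw [Finset.card_erase_of_mem (Finset.mem_erase.mpr ⟨Ne.symm hne, hv⟩),
      Finset.card_erase_of_mem hu, if_pos hu, if_pos hv]
  · rw [Finset.erase_eq_of_notMem (by simp [Finset.mem_erase, hv]),
      Finset.card_erase_of_mem hu, if_pos hu, if_neg hv]
    omega
  · rw [Finset.card_erase_of_mem (Finset.mem_erase.mpr ⟨Ne.symm hne, hv⟩),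
      Finset.erase_eq_of_notMem hu, if_neg hu, if_pos hv]
    omega
  · rw [Finset.erase_eq_of_notMem (by simp [Finset.mem_erase, hv]),
      Finset.erase_eq_of_notMem hu, if_neg hu, if_neg hv]
    omega

lemma card_sdiff_diag (S : Finset ℕ) (u : ℕ) :
    (S \ {u,u}).card = S.card - (if u ∈ S then 1 else 0) := by
  classical
  have hE : ({u,u} : Finset ℕ) = {u} := by simp
  rw [hE, ← Finset.erase_eq, Finset.card_erase_eq_ite]
  by_cases hu : u ∈ S <;> simp [hu]

lemma mem_balSet0 (m x : ℕ) : x ∈ balSet m 0 ↔ (1 ≤ x ∧ x ≤ m-2) ∨ x = m-1 ∨ x = m+1 := by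
  simpa using mem_balSet_iff m x 0
lemma mem_balSet1 (m x : ℕ) : x ∈ balSet m 1 ↔ (1 ≤ x ∧ x ≤ m-2) ∨ x = m-1 ∨ x = m+2 := by
  simpa using mem_balSet_iff m x 1
lemma mem_balSet2 (m x : ℕ) : x ∈ balSet m 2 ↔ (1 ≤ x ∧ x ≤ m-2) ∨ x = m ∨ x = m+1 := by
  simpa using mem_balSet_iff m x 2
lemma mem_balSet3 (m x : ℕ) : x ∈ balSet m 3 ↔ (1 ≤ x ∧ x ≤ m-2) ∨ x = m ∨ x = m+2 := by
  simpa using mem_balSet_iff m x 3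


lemma phi_closed (n m : ℕ) (hm : 3 ≤ m) (L : Fin 2 ⊕ Fin n → Finset ℕ)
    (h0 : L (Sum.inl 0) = Finset.Icc 1 m)
    (h1 : L (Sum.inl 1) = Finset.Icc 1 (m - 2) ∪ {m + 1, m + 2})
    (hz : ∑ i : Fin 4, zCount L m i = n) :
    numListColorings (K2l n) L = (m-2)*((m-1)^(zCount L m 0)*(m-1)^(zCount L m 1)*(m-1)^(zCount L m 2)*(m-1)^(zCount L m 3)) + (m-2)*(m-3)*((m-2)^(zCount L m 0)*(m-2)^(zCount L m 1)*(m-2)^(zCount L m 2)*(m-2)^(zCount L m 3)) + (m-2)*((m-2)^(zCount L m 0)*(m-1)^(zCount L m 1)*(m-2)^(zCount L m 2)*(m-1)^(zCount L m 3)) + (m-2)*((m-1)^(zCount L m 0)*(m-2)^(zCount L m 1)*(m-1)^(zCount L m 2)*(m-2)^(zCount L m 3)) + (m-2)*((m-2)^(zCount L m 0)*(m-2)^(zCount L m 1)*(m-1)^(zCount L m 2)*(m-1)^(zCount L m 3)) + (m-2)*((m-1)^(zCount L m 0)*(m-1)^(zCount L m 1)*(m-2)^(zCount L m 2)*(m-2)^(zCount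 L m 3)) + ((m-2)^(zCount L m 0)*(m-1)^(zCount L m 1)*(m-1)^(zCount L m 2)*m^(zCount L m 3)) + ((m-1)^(zCount L m 0)*(m-2)^(zCount L m 1)*m^(zCount L m 2)*(m-1)^(zCount L m 3)) + ((m-1)^(zCount L m 0)*m^(zCount L m 1)*(m-2)^(zCount L m 2)*(m-1)^(zCount L m 3)) + (m^(zCount L m 0)*(m-1)^(zCount L m 1)*(m-1)^(zCount L m 2)*(m-2)^(zCount L m 3)) := by
  classical
  have memA : ∀ (i : Fin 4) {c : ℕ}, c ∈ Finset.Icc 1 (m-2) → c ∈ balSet m i := by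
    intro i c hc
    rw [Finset.mem_Icc] at hc
    rw [mem_balSet_iff]
    exact Or.inl hc
  have hI : Finset.Icc 1 m = Finset.Icc 1 (m-2) ∪ {m-1, m} := by
    ext x
    simp only [Finset.mem_Icc, Finset.mem_union, Finset.mem_insert, Finset.mem_singleton]
    omega
  have hdI : Disjoint (Finset.Icc 1 (m-2)) ({m-1, m} : Finset ℕ) := by
    simp only [Finset.disjoint_left, Finset.mem_Icc, Finset.mem_insert, Finset.mem_singleton]
    omega
  have hdB : Disjoint (Finset.Icc 1 (m-2)) ({m+1, m+2} : Finset ℕ) := by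
    simp only [Finset.disjoint_left, Finset.mem_Icc, Finset.mem_insert, Finset.mem_singleton]
    omega
  have hm1m : (m-1 : ℕ) ∉ ({m} : Finset ℕ) := by simp; omega
  have hm12 : (m+1 : ℕ) ∉ ({m+2} : Finset ℕ) := by simp
  have hcardA : (Finset.Icc 1 (m-2)).card = m - 2 := by rw [Nat.card_Icc]; omega
  rw [grouped n m hm L h0 h1 hz, hI, Finset.sum_union hdI]
  simp only [Finset.sum_union hdB, Finset.sum_insert hm12, Finset.sum_singleton,
    Finset.sum_insert hm1m]
  have hMain : ∀ c1 ∈ Finset.Icc 1 (m-2),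
      ((∑ c2 ∈ Finset.Icc 1 (m-2), ∏ i : Fin 4, (((balSet m i) \ {c1, c2}).card) ^ (zCount L m i))
        + ((∏ i : Fin 4, (((balSet m i) \ {c1, m+1}).card) ^ (zCount L m i))
          + (∏ i : Fin 4, (((balSet m i) \ {c1, m+2}).card) ^ (zCount L m i))))
      = ((m-1)^(zCount L m 0)*(m-1)^(zCount L m 1)*(m-1)^(zCount L m 2)*(m-1)^(zCount L m 3)) + (m-3)*((m-2)^(zCount L m 0)*(m-2)^(zCount L m 1)*(m-2)^(zCount L m 2)*(m-2)^(zCount L m 3)) + ((m-2)^(zCount L m 0)*(m-1)^(zCount L m 1)*(m-2)^(zCount L m 2)*(m-1)^(zCount L m 3)) + ((m-1)^(zCount L m 0)*(m-2)^(zCount L m 1)*(m-1)^(zCount L m 2)*(m-2)^(zCount L m 3)) := by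
    intro c1 hc1
    have hb := Finset.mem_Icc.mp hc1
    rw [← Finset.add_sum_erase _ _ hc1]
    have hdiagv : (∏ i : Fin 4, (((balSet m i) \ {c1, c1}).card) ^ (zCount L m i)) = (m-1)^(zCount L m 0)*(m-1)^(zCount L m 1)*(m-1)^(zCount L m 2)*(m-1)^(zCount L m 3) := by
      rw [Fin.prod_univ_four]
      have e0 : ((balSet m 0) \ {c1, c1}).card = m-1 := by
        rw [card_sdiff_diag, card_balSet m hm, if_pos (memA 0 hc1)]
      have e1 : ((balSet m 1) \ {c1, c1}).card = m-1 := by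
        rw [card_sdiff_diag, card_balSet m hm, if_pos (memA 1 hc1)]
      have e2 : ((balSet m 2) \ {c1, c1}).card = m-1 := by
        rw [card_sdiff_diag, card_balSet m hm, if_pos (memA 2 hc1)]
      have e3 : ((balSet m 3) \ {c1, c1}).card = m-1 := by
        rw [card_sdiff_diag, card_balSet m hm, if_pos (memA 3 hc1)]
      rw [e0, e1, e2, e3]
    have herase : (∑ c2 ∈ (Finset.Icc 1 (m-2)).erase c1,
        ∏ i : Fin 4, (((balSet m i) \ {c1, c2}).card) ^ (zCount L m i)) = (m-3)*((m-2)^(zCount L m 0)*(m-2)^(zCount L m 1)*(m-2)^(zCount L m 2)*(m-2)^(zCount L m 3)) := by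
      have hpt : ∀ c2 ∈ (Finset.Icc 1 (m-2)).erase c1,
          (∏ i : Fin 4, (((balSet m i) \ {c1, c2}).card) ^ (zCount L m i)) = (m-2)^(zCount L m 0)*(m-2)^(zCount L m 1)*(m-2)^(zCount L m 2)*(m-2)^(zCount L m 3) := by
        intro c2 hc2'
        obtain ⟨hne', hc2⟩ := Finset.mem_erase.mp hc2'
        have Tne : c1 ≠ c2 := Ne.symm hne'
        rw [Fin.prod_univ_four]
        have e0 : ((balSet m 0) \ {c1, c2}).card = m-2 := by
          rw [card_sdiff_pair _ _ _ Tne, card_balSet m hm, if_pos (memA 0 hc1),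
            if_pos (memA 0 hc2)]
          omega
        have e1 : ((balSet m 1) \ {c1, c2}).card = m-2 := by
          rw [card_sdiff_pair _ _ _ Tne, card_balSet m hm, if_pos (memA 1 hc1),
            if_pos (memA 1 hc2)]
          omega
        have e2 : ((balSet m 2) \ {c1, c2}).card = m-2 := by
          rw [card_sdiff_pair _ _ _ Tne, card_balSet m hm, if_pos (memA 2 hc1),
            if_pos (memA 2 hc2)]
          omega
        have e3 : ((balSet m 3) \ {c1, c2}).card = m-2 := by
          rw [card_sdiff_pair _ _ _ Tne, card_balSet m hm, if_pos (memA 3 hc1),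
            if_pos (memA 3 hc2)]
          omega
        rw [e0, e1, e2, e3]
      rw [Finset.sum_congr rfl hpt, Finset.sum_const, Finset.card_erase_of_mem hc1, hcardA,
        smul_eq_mul]
      congr 1
    have TX02ne : c1 ≠ m+1 := by omega
    have TX02 : (∏ i : Fin 4, (((balSet m i) \ {c1, m+1}).card) ^ (zCount L m i)) = (m-2)^(zCount L m 0)*(m-1)^(zCount L m 1)*(m-2)^(zCount L m 2)*(m-1)^(zCount L m 3) := by
      rw [Fin.prod_univ_four]
      have e0 : ((balSet m 0) \ {c1, m+1}).card = m-2 := by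
        rw [card_sdiff_pair _ _ _ TX02ne, card_balSet m hm, if_pos (memA 0 hc1), if_pos (by rw [mem_balSet0]; omega : (m+1) ∈ balSet m 0)]; omega
      have e1 : ((balSet m 1) \ {c1, m+1}).card = m-1 := by
        rw [card_sdiff_pair _ _ _ TX02ne, card_balSet m hm, if_pos (memA 1 hc1), if_neg (by rw [mem_balSet1]; omega : (m+1) ∉ balSet m 1)]; omega
      have e2 : ((balSet m 2) \ {c1, m+1}).card = m-2 := by
        rw [card_sdiff_pair _ _ _ TX02ne, card_balSet m hm, if_pos (memA 2 hc1), if_pos (by rw [mem_balSet2]; omega : (m+1) ∈ balSet m 2)]; omega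
      have e3 : ((balSet m 3) \ {c1, m+1}).card = m-1 := by
        rw [card_sdiff_pair _ _ _ TX02ne, card_balSet m hm, if_pos (memA 3 hc1), if_neg (by rw [mem_balSet3]; omega : (m+1) ∉ balSet m 3)]; omega
      rw [e0, e1, e2, e3]
    have TX13ne : c1 ≠ m+2 := by omega
    have TX13 : (∏ i : Fin 4, (((balSet m i) \ {c1, m+2}).card) ^ (zCount L m i)) = (m-1)^(zCount L m 0)*(m-2)^(zCount L m 1)*(m-1)^(zCount L m 2)*(m-2)^(zCount L m 3) := by
      rw [Fin.prod_univ_four]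
      have e0 : ((balSet m 0) \ {c1, m+2}).card = m-1 := by
        rw [card_sdiff_pair _ _ _ TX13ne, card_balSet m hm, if_pos (memA 0 hc1), if_neg (by rw [mem_balSet0]; omega : (m+2) ∉ balSet m 0)]; omega
      have e1 : ((balSet m 1) \ {c1, m+2}).card = m-2 := by
        rw [card_sdiff_pair _ _ _ TX13ne, card_balSet m hm, if_pos (memA 1 hc1), if_pos (by rw [mem_balSet1]; omega : (m+2) ∈ balSet m 1)]; omega
      have e2 : ((balSet m 2) \ {c1, m+2}).card = m-1 := by
        rw [card_sdiff_pair _ _ _ TX13ne, card_balSet m hm, if_pos (memA 2 hc1), if_neg (by rw [mem_balSet2]; omega : (m+2) ∉ balSet m 2)]; omega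
      have e3 : ((balSet m 3) \ {c1, m+2}).card = m-2 := by
        rw [card_sdiff_pair _ _ _ TX13ne, card_balSet m hm, if_pos (memA 3 hc1), if_pos (by rw [mem_balSet3]; omega : (m+2) ∈ balSet m 3)]; omega
      rw [e0, e1, e2, e3]
    rw [hdiagv, herase, TX02, TX13]
    ring
  rw [Finset.sum_congr rfl hMain, Finset.sum_const, hcardA, smul_eq_mul]
  have R1A : (∑ c2 ∈ Finset.Icc 1 (m-2),
      ∏ i : Fin 4, (((balSet m i) \ {m-1, c2}).card) ^ (zCount L m i)) = (m-2)*((m-2)^(zCount L m 0)*(m-2)^(zCount L m 1)*(m-1)^(zCount L m 2)*(m-1)^(zCount L m 3)) := by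
    have hpt : ∀ c2 ∈ Finset.Icc 1 (m-2),
        (∏ i : Fin 4, (((balSet m i) \ {m-1, c2}).card) ^ (zCount L m i)) = (m-2)^(zCount L m 0)*(m-2)^(zCount L m 1)*(m-1)^(zCount L m 2)*(m-1)^(zCount L m 3) := by
      intro c2 hc2
      have hb2 := Finset.mem_Icc.mp hc2
      have Tne : (m-1 : ℕ) ≠ c2 := by omega
      rw [Fin.prod_univ_four]
      have e0 : ((balSet m 0) \ {m-1, c2}).card = m-2 := by
        rw [card_sdiff_pair _ _ _ Tne, card_balSet m hm, if_pos (by rw [mem_balSet0]; omega : (m-1) ∈ balSet m 0), if_pos (memA 0 hc2)]; omega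
      have e1 : ((balSet m 1) \ {m-1, c2}).card = m-2 := by
        rw [card_sdiff_pair _ _ _ Tne, card_balSet m hm, if_pos (by rw [mem_balSet1]; omega : (m-1) ∈ balSet m 1), if_pos (memA 1 hc2)]; omega
      have e2 : ((balSet m 2) \ {m-1, c2}).card = m-1 := by
        rw [card_sdiff_pair _ _ _ Tne, card_balSet m hm, if_neg (by rw [mem_balSet2]; omega : (m-1) ∉ balSet m 2), if_pos (memA 2 hc2)]; omega
      have e3 : ((balSet m 3) \ {m-1, c2}).card = m-1 := by
        rw [card_sdiff_pair _ _ _ Tne, card_balSet m hm, if_neg (by rw [mem_balSet3]; omega : (m-1) ∉ balSet m 3), if_pos (memA 3 hc2)]; omega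
      rw [e0, e1, e2, e3]
    rw [Finset.sum_congr rfl hpt, Finset.sum_const, hcardA, smul_eq_mul]
  have R2A : (∑ c2 ∈ Finset.Icc 1 (m-2),
      ∏ i : Fin 4, (((balSet m i) \ {m, c2}).card) ^ (zCount L m i)) = (m-2)*((m-1)^(zCount L m 0)*(m-1)^(zCount L m 1)*(m-2)^(zCount L m 2)*(m-2)^(zCount L m 3)) := by
    have hpt : ∀ c2 ∈ Finset.Icc 1 (m-2),
        (∏ i : Fin 4, (((balSet m i) \ {m, c2}).card) ^ (zCount L m i)) = (m-1)^(zCount L m 0)*(m-1)^(zCount L m 1)*(m-2)^(zCount L m 2)*(m-2)^(zCount L m 3) := by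
      intro c2 hc2
      have hb2 := Finset.mem_Icc.mp hc2
      have Tne : (m : ℕ) ≠ c2 := by omega
      rw [Fin.prod_univ_four]
      have e0 : ((balSet m 0) \ {m, c2}).card = m-1 := by
        rw [card_sdiff_pair _ _ _ Tne, card_balSet m hm, if_neg (by rw [mem_balSet0]; omega : (m) ∉ balSet m 0), if_pos (memA 0 hc2)]; omega
      have e1 : ((balSet m 1) \ {m, c2}).card = m-1 := by
        rw [card_sdiff_pair _ _ _ Tne, card_balSet m hm, if_neg (by rw [mem_balSet1]; omega : (m) ∉ balSet m 1), if_pos (memA 1 hc2)]; omega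
      have e2 : ((balSet m 2) \ {m, c2}).card = m-2 := by
        rw [card_sdiff_pair _ _ _ Tne, card_balSet m hm, if_pos (by rw [mem_balSet2]; omega : (m) ∈ balSet m 2), if_pos (memA 2 hc2)]; omega
      have e3 : ((balSet m 3) \ {m, c2}).card = m-2 := by
        rw [card_sdiff_pair _ _ _ Tne, card_balSet m hm, if_pos (by rw [mem_balSet3]; omega : (m) ∈ balSet m 3), if_pos (memA 3 hc2)]; omega
      rw [e0, e1, e2, e3]
    rw [Finset.sum_congr rfl hpt, Finset.sum_const, hcardA, smul_eq_mul]
  have C11ne : (m-1 : ℕ) ≠ m+1 := by omega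
  have C11 : (∏ i : Fin 4, (((balSet m i) \ {m-1, m+1}).card) ^ (zCount L m i)) = (m-2)^(zCount L m 0)*(m-1)^(zCount L m 1)*(m-1)^(zCount L m 2)*m^(zCount L m 3) := by
    rw [Fin.prod_univ_four]
    have e0 : ((balSet m 0) \ {m-1, m+1}).card = m-2 := by
      rw [card_sdiff_pair _ _ _ C11ne, card_balSet m hm, if_pos (by rw [mem_balSet0]; omega : (m-1) ∈ balSet m 0), if_pos (by rw [mem_balSet0]; omega : (m+1) ∈ balSet m 0)]; omega
    have e1 : ((balSet m 1) \ {m-1, m+1}).card = m-1 := by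
      rw [card_sdiff_pair _ _ _ C11ne, card_balSet m hm, if_pos (by rw [mem_balSet1]; omega : (m-1) ∈ balSet m 1), if_neg (by rw [mem_balSet1]; omega : (m+1) ∉ balSet m 1)]; omega
    have e2 : ((balSet m 2) \ {m-1, m+1}).card = m-1 := by
      rw [card_sdiff_pair _ _ _ C11ne, card_balSet m hm, if_neg (by rw [mem_balSet2]; omega : (m-1) ∉ balSet m 2), if_pos (by rw [mem_balSet2]; omega : (m+1) ∈ balSet m 2)]; omega
    have e3 : ((balSet m 3) \ {m-1, m+1}).card = m := by
      rw [card_sdiff_pair _ _ _ C11ne, card_balSet m hm, if_neg (by rw [mem_balSet3]; omega : (m-1) ∉ balSet m 3), if_neg (by rw [mem_balSet3]; omega : (m+1) ∉ balSet m 3)]; omega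
    rw [e0, e1, e2, e3]
  have C12ne : (m-1 : ℕ) ≠ m+2 := by omega
  have C12 : (∏ i : Fin 4, (((balSet m i) \ {m-1, m+2}).card) ^ (zCount L m i)) = (m-1)^(zCount L m 0)*(m-2)^(zCount L m 1)*m^(zCount L m 2)*(m-1)^(zCount L m 3) := by
    rw [Fin.prod_univ_four]
    have e0 : ((balSet m 0) \ {m-1, m+2}).card = m-1 := by
      rw [card_sdiff_pair _ _ _ C12ne, card_balSet m hm, if_pos (by rw [mem_balSet0]; omega : (m-1) ∈ balSet m 0), if_neg (by rw [mem_balSet0]; omega : (m+2) ∉ balSet m 0)]; omega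
    have e1 : ((balSet m 1) \ {m-1, m+2}).card = m-2 := by
      rw [card_sdiff_pair _ _ _ C12ne, card_balSet m hm, if_pos (by rw [mem_balSet1]; omega : (m-1) ∈ balSet m 1), if_pos (by rw [mem_balSet1]; omega : (m+2) ∈ balSet m 1)]; omega
    have e2 : ((balSet m 2) \ {m-1, m+2}).card = m := by
      rw [card_sdiff_pair _ _ _ C12ne, card_balSet m hm, if_neg (by rw [mem_balSet2]; omega : (m-1) ∉ balSet m 2), if_neg (by rw [mem_balSet2]; omega : (m+2) ∉ balSet m 2)]; omega
    have e3 : ((balSet m 3) \ {m-1, m+2}).card = m-1 := by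
      rw [card_sdiff_pair _ _ _ C12ne, card_balSet m hm, if_neg (by rw [mem_balSet3]; omega : (m-1) ∉ balSet m 3), if_pos (by rw [mem_balSet3]; omega : (m+2) ∈ balSet m 3)]; omega
    rw [e0, e1, e2, e3]
  have C21ne : (m : ℕ) ≠ m+1 := by omega
  have C21 : (∏ i : Fin 4, (((balSet m i) \ {m, m+1}).card) ^ (zCount L m i)) = (m-1)^(zCount L m 0)*m^(zCount L m 1)*(m-2)^(zCount L m 2)*(m-1)^(zCount L m 3) := by
    rw [Fin.prod_univ_four]
    have e0 : ((balSet m 0) \ {m, m+1}).card = m-1 := by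
      rw [card_sdiff_pair _ _ _ C21ne, card_balSet m hm, if_neg (by rw [mem_balSet0]; omega : (m) ∉ balSet m 0), if_pos (by rw [mem_balSet0]; omega : (m+1) ∈ balSet m 0)]; omega
    have e1 : ((balSet m 1) \ {m, m+1}).card = m := by
      rw [card_sdiff_pair _ _ _ C21ne, card_balSet m hm, if_neg (by rw [mem_balSet1]; omega : (m) ∉ balSet m 1), if_neg (by rw [mem_balSet1]; omega : (m+1) ∉ balSet m 1)]; omega
    have e2 : ((balSet m 2) \ {m, m+1}).card = m-2 := by
      rw [card_sdiff_pair _ _ _ C21ne, card_balSet m hm, if_pos (by rw [mem_balSet2]; omega : (m) ∈ balSet m 2), if_pos (by rw [mem_balSet2]; omega : (m+1) ∈ balSet m 2)]; omega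
    have e3 : ((balSet m 3) \ {m, m+1}).card = m-1 := by
      rw [card_sdiff_pair _ _ _ C21ne, card_balSet m hm, if_pos (by rw [mem_balSet3]; omega : (m) ∈ balSet m 3), if_neg (by rw [mem_balSet3]; omega : (m+1) ∉ balSet m 3)]; omega
    rw [e0, e1, e2, e3]
  have C22ne : (m : ℕ) ≠ m+2 := by omega
  have C22 : (∏ i : Fin 4, (((balSet m i) \ {m, m+2}).card) ^ (zCount L m i)) = m^(zCount L m 0)*(m-1)^(zCount L m 1)*(m-1)^(zCount L m 2)*(m-2)^(zCount L m 3) := by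
    rw [Fin.prod_univ_four]
    have e0 : ((balSet m 0) \ {m, m+2}).card = m := by
      rw [card_sdiff_pair _ _ _ C22ne, card_balSet m hm, if_neg (by rw [mem_balSet0]; omega : (m) ∉ balSet m 0), if_neg (by rw [mem_balSet0]; omega : (m+2) ∉ balSet m 0)]; omega
    have e1 : ((balSet m 1) \ {m, m+2}).card = m-1 := by
      rw [card_sdiff_pair _ _ _ C22ne, card_balSet m hm, if_neg (by rw [mem_balSet1]; omega : (m) ∉ balSet m 1), if_pos (by rw [mem_balSet1]; omega : (m+2) ∈ balSet m 1)]; omega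
    have e2 : ((balSet m 2) \ {m, m+2}).card = m-1 := by
      rw [card_sdiff_pair _ _ _ C22ne, card_balSet m hm, if_pos (by rw [mem_balSet2]; omega : (m) ∈ balSet m 2), if_neg (by rw [mem_balSet2]; omega : (m+2) ∉ balSet m 2)]; omega
    have e3 : ((balSet m 3) \ {m, m+2}).card = m-2 := by
      rw [card_sdiff_pair _ _ _ C22ne, card_balSet m hm, if_pos (by rw [mem_balSet3]; omega : (m) ∈ balSet m 3), if_pos (by rw [mem_balSet3]; omega : (m+2) ∈ balSet m 3)]; omega
    rw [e0, e1, e2, e3]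
  rw [R1A, R2A, C11, C12, C21, C22]
  ring

lemma psi_closed (n m : ℕ) (hm : 3 ≤ m) :
    chromPoly (K2l n) m = m * ((m-1)^n + (m-1)*(m-2)^n) := by
  classical
  rw [chromPoly, master]
  have hcard : (Finset.Icc 1 m).card = m := by rw [Nat.card_Icc]; omega
  have hin : ∀ c1 ∈ Finset.Icc 1 m,
      (∑ c2 ∈ Finset.Icc 1 m, ∏ _j : Fin n, ((Finset.Icc 1 m \ {c1, c2}).card))
        = (m-1)^n + (m-1)*(m-2)^n := by
    intro c1 hc1
    rw [← Finset.add_sum_erase _ _ hc1]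
    have h1 : (∏ _j : Fin n, ((Finset.Icc 1 m \ {c1, c1}).card)) = (m-1)^n := by
      rw [Finset.prod_const, Finset.card_univ, Fintype.card_fin, card_sdiff_diag, hcard,
        if_pos hc1]
    have h2 : (∑ c2 ∈ (Finset.Icc 1 m).erase c1,
        ∏ _j : Fin n, ((Finset.Icc 1 m \ {c1, c2}).card)) = (m-1)*(m-2)^n := by
      have hpt : ∀ c2 ∈ (Finset.Icc 1 m).erase c1,
          (∏ _j : Fin n, ((Finset.Icc 1 m \ {c1, c2}).card)) = (m-2)^n := by
        intro c2 hc2'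
        obtain ⟨hne', hc2⟩ := Finset.mem_erase.mp hc2'
        rw [Finset.prod_const, Finset.card_univ, Fintype.card_fin,
          card_sdiff_pair _ _ _ (Ne.symm hne'), hcard, if_pos hc1, if_pos hc2]
        congr 1
      rw [Finset.sum_congr rfl hpt, Finset.sum_const, Finset.card_erase_of_mem hc1, hcard,
        smul_eq_mul]
    rw [h1, h2]
  rw [Finset.sum_congr rfl hin, Finset.sum_const, hcard, smul_eq_mul]

set_option maxHeartbeats 1000000 in
lemma arith_real (x : ℝ) (hx : 3 ≤ x) (q za zb zc zd : ℕ)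
    (ε : ℝ) (hε0 : 0 < ε) (hε2 : ε < 2)
    (hq : max (Real.log (ε / (2 * (x - 2))) / (2 * Real.log ((x - 2) / (x - 1))))
        (Real.log ((2 - ε) / 4) / Real.log (1 - 1 / (x - 1) ^ 2)) < (q : ℝ))
    (hqa : q ≤ za) (hb1 : za ≤ zb) (hb2 : zb ≤ za + 1) (hc1 : za ≤ zc) (hc2 : zc ≤ za + 1)
    (hd1 : za ≤ zd) (hd2 : zd ≤ za + 1) :
    (x-2)*((x-2)^zb*(x-2)^zd*(x-1)^za*(x-1)^zc)
    + (x-2)*((x-2)^zc*(x-2)^zd*(x-1)^za*(x-1)^zb)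
    + (x-2)^zc*(x-1)^za*(x-1)^zd*x^zb
    + (x-2)^zb*(x-1)^za*(x-1)^zd*x^zc
    + 2*((x-2)^zd*(x-1)^zb*(x-1)^zc*x^za)
    ≤ 2*((x-1)^(za+zb+zc+zd)) := by
  set X : ℝ := x - 2 with hXdef
  set Y : ℝ := x - 1 with hYdef
  have hX0 : 0 < X := by rw [hXdef]; linarith
  have hY0 : 0 < Y := by rw [hYdef]; linarith
  have hZ0 : 0 < x := by linarith
  have hXY : X < Y := by rw [hXdef, hYdef]; linarith
  have hYx : Y < x := by rw [hYdef]; linarith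
  have hXZ : X + x = 2 * Y := by rw [hXdef, hYdef]; ring
  have hXZY : X * x ≤ Y^2 := by rw [hXdef, hYdef]; nlinarith
  obtain ⟨hqL, hqR⟩ := max_lt_iff.mp hq
  have hu0 : 0 < ε / (2 * X) := by positivity
  have hr0 : 0 < X / Y := by positivity
  have hr1 : X / Y < 1 := (div_lt_one hY0).mpr hXY
  have hlogr : Real.log (X / Y) < 0 := Real.log_neg hr0 hr1
  have hkey1 : X ^ (2 * q) < ε / (2 * X) * Y ^ (2 * q) := by
    have hc : 2 * Real.log (X / Y) < 0 := by linarith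
    have h1 : (q : ℝ) * (2 * Real.log (X / Y)) <
        Real.log (ε / (2 * X)) / (2 * Real.log (X / Y)) * (2 * Real.log (X / Y)) :=
      mul_lt_mul_of_neg_right hqL hc
    rw [div_mul_cancel₀ _ (ne_of_lt hc)] at h1
    have h2 : Real.log ((X / Y) ^ (2 * q)) < Real.log (ε / (2 * X)) := by
      rw [Real.log_pow]
      push_cast
      nlinarith [h1]
    have h3 : (X / Y) ^ (2 * q) < ε / (2 * X) := by
      have h4 := Real.exp_lt_exp.mpr h2
      rwa [Real.exp_log (pow_pos hr0 _), Real.exp_log hu0] at h4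
    rw [div_pow] at h3
    calc X ^ (2*q) = X ^ (2*q) / Y ^ (2*q) * Y ^ (2*q) := by
          field_simp
      _ < ε / (2 * X) * Y ^ (2 * q) :=
          mul_lt_mul_of_pos_right h3 (pow_pos hY0 _)
  have hrho : 1 - 1 / Y ^ 2 = X * x / Y ^ 2 := by
    rw [hXdef, hYdef]
    have hne : x - 1 ≠ 0 := by rw [← hYdef]; linarith
    field_simp
    ring
  have hv0 : 0 < (2 - ε) / 4 := by linarith
  have hrho0 : 0 < X * x / Y ^ 2 := by positivity
  have hrho1 : X * x / Y ^ 2 < 1 := by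
    rw [div_lt_one (by positivity)]
    nlinarith
  have hkey2 : (X * x) ^ q < (2 - ε) / 4 * (Y ^ 2) ^ q := by
    have hlogrho : Real.log (X * x / Y ^ 2) < 0 := Real.log_neg hrho0 hrho1
    have hlogrho' : Real.log (1 - 1 / Y ^ 2) < 0 := by rw [hrho]; exact hlogrho
    have h1 := mul_lt_mul_of_neg_right hqR hlogrho'
    rw [hrho, div_mul_cancel₀ _ (ne_of_lt hlogrho)] at h1
    have h2 : Real.log ((X * x / Y ^ 2) ^ q) < Real.log ((2 - ε) / 4) := by
      rw [Real.log_pow]; exact h1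
    have h3 : (X * x / Y ^ 2) ^ q < (2 - ε) / 4 := by
      have h4 := Real.exp_lt_exp.mpr h2
      rwa [Real.exp_log (pow_pos hrho0 _), Real.exp_log hv0] at h4
    rw [div_pow] at h3
    calc (X*x) ^ q = (X*x) ^ q / (Y^2) ^ q * (Y^2) ^ q := by field_simp
      _ < (2 - ε) / 4 * (Y ^ 2) ^ q := mul_lt_mul_of_pos_right h3 (pow_pos (by positivity) _)
  have key1 : ∀ w : ℕ, 2*q ≤ w → X * X ^ w ≤ ε / 2 * Y ^ w := by
    intro w hw
    obtain ⟨u, rfl⟩ : ∃ u, w = 2*q + u := ⟨w - 2*q, by omega⟩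
    have hXu : X ^ u ≤ Y ^ u := pow_le_pow_left₀ (le_of_lt hX0) (le_of_lt hXY) u
    have e2 : X * X ^ (2*q) ≤ ε / 2 * Y ^ (2*q) := by
      have h5 := mul_lt_mul_of_pos_left hkey1 hX0
      have e3 : X * (ε / (2*X) * Y ^ (2*q)) = ε/2 * Y ^ (2*q) := by
        field_simp
      rw [e3] at h5
      exact le_of_lt h5
    calc X * X ^ (2*q+u) = (X * X ^ (2*q)) * X ^ u := by rw [pow_add]; ring
      _ ≤ (ε / 2 * Y ^ (2*q)) * Y ^ u := by
          apply mul_le_mul e2 hXu (pow_pos hX0 _).le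
          positivity
      _ = ε / 2 * Y ^ (2*q+u) := by rw [pow_add]; ring
  have key2 : ∀ w : ℕ, q ≤ w → (X * x) ^ w ≤ (2 - ε) / 4 * (Y ^ 2) ^ w := by
    intro w hw
    obtain ⟨u, rfl⟩ : ∃ u, w = q + u := ⟨w - q, by omega⟩
    have hXu : (X*x) ^ u ≤ (Y^2) ^ u := pow_le_pow_left₀ (by positivity) hXZY u
    calc (X*x) ^ (q+u) = (X*x) ^ q * (X*x) ^ u := by rw [pow_add]
      _ ≤ ((2-ε)/4 * (Y^2) ^ q) * (Y^2) ^ u := by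
          apply mul_le_mul (le_of_lt hkey2) hXu (by positivity) (by positivity)
      _ = (2-ε)/4 * (Y^2) ^ (q+u) := by rw [pow_add]; ring
  have hS1 : X*(X^zb*X^zd*Y^za*Y^zc) ≤ ε/2 * Y^(za+zb+zc+zd) := by
    have h := key1 (zb+zd) (by omega)
    calc X*(X^zb*X^zd*Y^za*Y^zc) = (X * X^(zb+zd)) * (Y^za*Y^zc) := by
          rw [pow_add]; ring
      _ ≤ (ε/2 * Y^(zb+zd)) * (Y^za*Y^zc) := by
          apply mul_le_mul_of_nonneg_right h
          positivity
      _ = ε/2 * Y^(za+zb+zc+zd) := by rw [pow_add, pow_add, pow_add]; ring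
  have hS2 : X*(X^zc*X^zd*Y^za*Y^zb) ≤ ε/2 * Y^(za+zb+zc+zd) := by
    have h := key1 (zc+zd) (by omega)
    calc X*(X^zc*X^zd*Y^za*Y^zb) = (X * X^(zc+zd)) * (Y^za*Y^zb) := by
          rw [pow_add]; ring
      _ ≤ (ε/2 * Y^(zc+zd)) * (Y^za*Y^zb) := by
          apply mul_le_mul_of_nonneg_right h
          positivity
      _ = ε/2 * Y^(za+zb+zc+zd) := by rw [pow_add, pow_add, pow_add]; ring
  have haux : ∀ u : ℕ, q ≤ u →
      X^(u+1)*Y^za*Y^zd*x^u + X^u*Y^za*Y^zd*x^(u+1) ≤ (2-ε)/2 * Y^(za+u+(u+1)+zd) := by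
    intro u hu
    have h := key2 u hu
    have e : X^(u+1)*Y^za*Y^zd*x^u + X^u*Y^za*Y^zd*x^(u+1)
        = (X*x)^u * (X + x) * (Y^za*Y^zd) := by
      rw [mul_pow, pow_succ, pow_succ]; ring
    rw [e, hXZ]
    calc (X*x)^u * (2*Y) * (Y^za*Y^zd) ≤ ((2-ε)/4 * (Y^2)^u) * (2*Y) * (Y^za*Y^zd) := by
          apply mul_le_mul_of_nonneg_right (mul_le_mul_of_nonneg_right h (by positivity))
          positivity
      _ = (2-ε)/2 * Y^(za+u+(u+1)+zd) := by
          rw [← pow_mul, pow_add, pow_add, pow_add, pow_succ]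
          ring
  have hS34 : X^zc*Y^za*Y^zd*x^zb + X^zb*Y^za*Y^zd*x^zc
      ≤ (2-ε)/2 * Y^(za+zb+zc+zd) := by
    rcases (show zb = zc ∨ zc = zb + 1 ∨ zb = zc + 1 by omega) with heq | heq | heq
    · subst heq
      have h := key2 zb (by omega)
      have e : X^zb*Y^za*Y^zd*x^zb + X^zb*Y^za*Y^zd*x^zb = 2 * ((X*x)^zb * (Y^za*Y^zd)) := by
        rw [mul_pow]; ring
      rw [e]
      calc 2 * ((X*x)^zb * (Y^za*Y^zd)) ≤ 2 * (((2-ε)/4 * (Y^2)^zb) * (Y^za*Y^zd)) := by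
            apply mul_le_mul_of_nonneg_left
              (mul_le_mul_of_nonneg_right h (by positivity)) (by norm_num)
        _ = (2-ε)/2 * Y^(za+zb+zb+zd) := by
            rw [← pow_mul, pow_add, pow_add, pow_add]
            ring
    · subst heq
      have h := haux zb (by omega)
      have e : za+zb+(zb+1)+zd = za+zb+(zb+1)+zd := rfl
      exact h
    · subst heq
      have h := haux zc (by omega)
      have e : za+zc+(zc+1)+zd = za+(zc+1)+zc+zd := by omega
      rw [e] at h
      linarith
  have hS5 : 2*(X^zd*Y^zb*Y^zc*x^za) ≤ (2-ε)/2 * Y^(za+zb+zc+zd) := by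
    obtain ⟨u, rfl⟩ : ∃ u, zd = za + u := ⟨zd - za, by omega⟩
    have h := key2 za hqa
    have hXu : X ^ u ≤ Y ^ u := pow_le_pow_left₀ (le_of_lt hX0) (le_of_lt hXY) u
    have e : X^(za+u)*Y^zb*Y^zc*x^za = (X*x)^za * X^u * (Y^zb*Y^zc) := by
      rw [mul_pow, pow_add]; ring
    rw [e]
    calc 2 * ((X*x)^za * X^u * (Y^zb*Y^zc))
        ≤ 2 * (((2-ε)/4 * (Y^2)^za) * Y^u * (Y^zb*Y^zc)) := by
          apply mul_le_mul_of_nonneg_left _ (by norm_num)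
          apply mul_le_mul_of_nonneg_right _ (by positivity)
          apply mul_le_mul h hXu (pow_pos hX0 _).le
          positivity
      _ = (2-ε)/2 * Y^(za+zb+zc+(za+u)) := by
          rw [← pow_mul, pow_add, pow_add, pow_add]
          ring
  clear_value X Y
  linarith [hS1, hS2, hS34, hS5]

lemma arith_core (m q za zb zc zd : ℕ) (hm : 3 ≤ m)
    (ε : ℝ) (hε0 : 0 < ε) (hε2 : ε < 2)
    (hq : max (Real.log (ε / (2 * ((m : ℝ) - 2))) / (2 * Real.log (((m : ℝ) - 2) / ((m : ℝ) - 1))))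
        (Real.log ((2 - ε) / 4) / Real.log (1 - 1 / ((m : ℝ) - 1) ^ 2)) < (q : ℝ))
    (hqa : q ≤ za) (hb1 : za ≤ zb) (hb2 : zb ≤ za + 1) (hc1 : za ≤ zc) (hc2 : zc ≤ za + 1)
    (hd1 : za ≤ zd) (hd2 : zd ≤ za + 1) :
    (m-2)*((m-2)^zb*(m-2)^zd*(m-1)^za*(m-1)^zc)
    + (m-2)*((m-2)^zc*(m-2)^zd*(m-1)^za*(m-1)^zb)
    + (m-2)^zc*(m-1)^za*(m-1)^zd*m^zb
    + (m-2)^zb*(m-1)^za*(m-1)^zd*m^zc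
    + 2*((m-2)^zd*(m-1)^zb*(m-1)^zc*m^za)
    ≤ 2*((m-1)^(za+zb+zc+zd)) := by
  have h2m : 2 ≤ m := by omega
  have h1m : 1 ≤ m := by omega
  have hx : (3 : ℝ) ≤ (m : ℝ) := by exact_mod_cast hm
  rw [← Nat.cast_le (α := ℝ)]
  push_cast [Nat.cast_sub h2m, Nat.cast_sub h1m]
  exact arith_real (m : ℝ) hx q za zb zc zd ε hε0 hε2 hq hqa hb1 hb2 hc1 hc2 hd1 hd2

def phiExpr (k N0 N1 N2 N3 : ℕ) : ℕ :=
  (k+1)*((k+2)^N0*(k+2)^N1*(k+2)^N2*(k+2)^N3)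
  + (k+1)*k*((k+1)^N0*(k+1)^N1*(k+1)^N2*(k+1)^N3)
  + (k+1)*((k+1)^N0*(k+2)^N1*(k+1)^N2*(k+2)^N3)
  + (k+1)*((k+2)^N0*(k+1)^N1*(k+2)^N2*(k+1)^N3)
  + (k+1)*((k+1)^N0*(k+1)^N1*(k+2)^N2*(k+2)^N3)
  + (k+1)*((k+2)^N0*(k+2)^N1*(k+1)^N2*(k+1)^N3)
  + (k+1)^N0*(k+2)^N1*(k+2)^N2*(k+3)^N3
  + (k+2)^N0*(k+1)^N1*(k+3)^N2*(k+2)^N3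
  + (k+2)^N0*(k+3)^N1*(k+1)^N2*(k+2)^N3
  + (k+3)^N0*(k+2)^N1*(k+2)^N2*(k+1)^N3

lemma step_lemma (k l A B C D : ℕ) (hsum : A+B+C+D = l)
    (hlt : phiExpr k A B C D < (k+3)*((k+2)^l + (k+2)*(k+1)^l))
    (key : (k+1)*((k+1)^B*(k+1)^D*(k+2)^A*(k+2)^C)
      + (k+1)*((k+1)^C*(k+1)^D*(k+2)^A*(k+2)^B)
      + (k+1)^C*(k+2)^A*(k+2)^D*(k+3)^B
      + (k+1)^B*(k+2)^A*(k+2)^D*(k+3)^C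
      + 2*((k+1)^D*(k+2)^B*(k+2)^C*(k+3)^A) ≤ 2*((k+2)^(A+B+C+D))) :
    phiExpr k (A+1) B C D < (k+3)*((k+2)^(l+1) + (k+2)*(k+1)^(l+1)) := by
  subst hsum
  calc phiExpr k (A+1) B C D
      = ((k+1) * phiExpr k A B C D + (k+1)*(k+2)^(A+B+C+D))
        + ((k+1)*((k+1)^B*(k+1)^D*(k+2)^A*(k+2)^C)
          + (k+1)*((k+1)^C*(k+1)^D*(k+2)^A*(k+2)^B)
          + (k+1)^C*(k+2)^A*(k+2)^D*(k+3)^B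
          + (k+1)^B*(k+2)^A*(k+2)^D*(k+3)^C
          + 2*((k+1)^D*(k+2)^B*(k+2)^C*(k+3)^A)) := by
        unfold phiExpr; ring
    _ ≤ ((k+1) * phiExpr k A B C D + (k+1)*(k+2)^(A+B+C+D)) + 2*((k+2)^(A+B+C+D)) :=
        Nat.add_le_add_left key _
    _ < ((k+1) * ((k+3)*((k+2)^(A+B+C+D) + (k+2)*(k+1)^(A+B+C+D)))
          + (k+1)*(k+2)^(A+B+C+D)) + 2*((k+2)^(A+B+C+D)) := by
        have h2 : (k+1) * phiExpr k A B C D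
            < (k+1) * ((k+3)*((k+2)^(A+B+C+D) + (k+2)*(k+1)^(A+B+C+D))) :=
          by exact (Nat.mul_lt_mul_left (by omega)).mpr hlt
        omega
    _ = (k+3)*((k+2)^(A+B+C+D+1) + (k+2)*(k+1)^(A+B+C+D+1)) := by ring

def extendL {l : ℕ} (L : Fin 2 ⊕ Fin l → Finset ℕ) (m : ℕ) (t : Fin 4) :
    Fin 2 ⊕ Fin (l+1) → Finset ℕ :=
  Sum.elim (fun i => L (Sum.inl i))
    (fun j => if h : (j : ℕ) < l then L (Sum.inr ⟨j, h⟩) else balSet m t)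

lemma zCount_extend {l m : ℕ} (hm : 3 ≤ m) (L : Fin 2 ⊕ Fin l → Finset ℕ) (t i : Fin 4) :
    zCount (extendL L m t) m i = zCount L m i + (if i = t then 1 else 0) := by
  classical
  unfold zCount
  rw [Finset.card_filter, Finset.card_filter, Fin.sum_univ_castSucc]
  congr 1
  · apply Finset.sum_congr rfl
    intro j _
    have hvl : extendL L m t (Sum.inr (Fin.castSucc j)) = L (Sum.inr j) := by
      have hj : ((Fin.castSucc j : Fin (l+1)) : ℕ) < l := j.isLt
      simp only [extendL, Sum.elim_inr, hj, dif_pos]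
      congr 1
    rw [hvl]
  · have hvl : extendL L m t (Sum.inr (Fin.last l)) = balSet m t := by
      simp only [extendL, Sum.elim_inr, Fin.val_last, lt_irrefl, dif_neg, not_false_iff]
    rw [hvl]
    by_cases h : i = t
    · subst h; simp
    · rw [if_neg (fun hh => h (balSet_inj m hm hh).symm), if_neg h]

/-- Lemma 3 of the paper: if `L` is a balanced `m`-assignment for `G = K_{2,l}` with
`m ≥ 3` and `P(G,L) < P(G,m)`, and there is `ε ∈ (0,2)` with
`⌊l/4⌋ > max{ln(ε/(2(m-2)))/(2 ln((m-2)/(m-1))), ln((2-ε)/4)/ln(1-1/(m-1)²)}`,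
then there is a balanced `m`-assignment `L'` for `G' = K_{2,l+1}` with
`P(G',L') < P(G',m)`. -/
theorem exists_balanced_succ (l m : ℕ) (hm : 3 ≤ m)
    (L : Fin 2 ⊕ Fin l → Finset ℕ) (hbal : IsBalanced m L)
    (hlt : numListColorings (K2l l) L < chromPoly (K2l l) m)
    (ε : ℝ) (hε : ε ∈ Set.Ioo (0 : ℝ) 2)
    (hl : ((l / 4 : ℕ) : ℝ) >
      max (Real.log (ε / (2 * ((m : ℝ) - 2))) / (2 * Real.log (((m : ℝ) - 2) / ((m : ℝ) - 1))))
        (Real.log ((2 - ε) / 4) / Real.log (1 - 1 / ((m : ℝ) - 1) ^ 2))) :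
    ∃ L' : Fin 2 ⊕ Fin (l + 1) → Finset ℕ, IsBalanced m L' ∧
      numListColorings (K2l (l + 1)) L' < chromPoly (K2l (l + 1)) m := by
  classical
  obtain ⟨hA, h0, h1, hz, hdiff⟩ := hbal
  obtain ⟨t, -, hmin'⟩ := Finset.exists_min_image (Finset.univ : Finset (Fin 4))
    (fun i => zCount L m i) ⟨0, Finset.mem_univ 0⟩
  have hmin : ∀ i, zCount L m t ≤ zCount L m i := fun i => hmin' i (Finset.mem_univ i)
  have hub : ∀ i, zCount L m i ≤ zCount L m t + 1 := by
    intro i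
    have h := abs_le.mp (hdiff i t)
    omega
  set L' := extendL L m t with hL'
  have hz' : ∀ i, zCount L' m i = zCount L m i + (if i = t then 1 else 0) :=
    fun i => zCount_extend hm L t i
  have h0' : L' (Sum.inl 0) = Finset.Icc 1 m := h0
  have h1' : L' (Sum.inl 1) = Finset.Icc 1 (m-2) ∪ {m+1, m+2} := h1
  have hsum' : (∑ i : Fin 4, zCount L' m i) = l + 1 := by
    rw [Finset.sum_congr rfl (fun i _ => hz' i), Finset.sum_add_distrib, hz,
      Finset.sum_ite_eq' Finset.univ t (fun _ => 1), if_pos (Finset.mem_univ t)]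
  have hs : zCount L m 0 + zCount L m 1 + zCount L m 2 + zCount L m 3 = l := by
    have h := hz
    rw [Fin.sum_univ_four] at h
    exact h
  refine ⟨L', ⟨?_, h0', h1', hsum', ?_⟩, ?_⟩
  · rintro (i | j)
    · exact hA (Sum.inl i)
    · by_cases h : (j : ℕ) < l
      · have e : L' (Sum.inr j) = L (Sum.inr ⟨j, h⟩) := by
          simp only [hL', extendL, Sum.elim_inr, h, dif_pos]
        rw [e]; exact hA _
      · have e : L' (Sum.inr j) = balSet m t := by
          simp only [hL', extendL, Sum.elim_inr, h, dif_neg, not_false_iff]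
        rw [e]; exact card_balSet m hm t
  · intro i j
    rw [hz' i, hz' j]
    have h1i := hmin i; have h1j := hmin j
    have h2i := hub i; have h2j := hub j
    rw [abs_le]
    by_cases hi : i = t <;> by_cases hj : j = t <;>
      simp only [hi, hj, if_pos rfl, if_neg, ite_true, ite_false] <;>
      push_cast <;> constructor <;> try omega
  · obtain ⟨k, rfl⟩ : ∃ k, m = k + 3 := ⟨m - 3, by omega⟩
    have E1 : k + 3 - 1 = k + 2 := by omega
    have E2 : k + 3 - 2 = k + 1 := by omega
    have E3 : k + 3 - 3 = k := by omega
    rw [phi_closed l (k+3) hm L h0 h1 hz, psi_closed l (k+3) hm] at hlt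
    rw [phi_closed (l+1) (k+3) hm L' h0' h1' hsum', psi_closed (l+1) (k+3) hm]
    rw [E1, E2, E3] at hlt ⊢
    fin_cases t
    · -- t = 0
      have hmin2 : ∀ i, zCount L (k+3) 0 ≤ zCount L (k+3) i := hmin
      have hub2 : ∀ i, zCount L (k+3) i ≤ zCount L (k+3) 0 + 1 := hub
      have hq : l / 4 ≤ zCount L (k+3) 0 := by
        have q0 := hub2 0; have q1 := hub2 1; have q2 := hub2 2; have q3 := hub2 3
        omega
      have c0 : zCount L' (k+3) 0 = zCount L (k+3) 0 + 1 := by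
        rw [hz' 0, if_pos (by decide)]
      have c1 : zCount L' (k+3) 1 = zCount L (k+3) 1 := by
        rw [hz' 1, if_neg (by decide)]; omega
      have c2 : zCount L' (k+3) 2 = zCount L (k+3) 2 := by
        rw [hz' 2, if_neg (by decide)]; omega
      have c3 : zCount L' (k+3) 3 = zCount L (k+3) 3 := by
        rw [hz' 3, if_neg (by decide)]; omega
      rw [c0, c1, c2, c3]
      have key := arith_core (k+3) (l/4) (zCount L (k+3) 0) (zCount L (k+3) 1)
        (zCount L (k+3) 2) (zCount L (k+3) 3) hm ε hε.1 hε.2 hl hq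
        (hmin2 1) (hub2 1) (hmin2 2) (hub2 2) (hmin2 3) (hub2 3)
      rw [E1, E2] at key
      have hstep := step_lemma k l _ _ _ _ (by omega)
        (lt_of_le_of_lt (le_of_eq (by unfold phiExpr; ring)) hlt) key
      exact lt_of_le_of_lt (le_of_eq (by unfold phiExpr; ring)) hstep
    · -- t = 1
      have hmin2 : ∀ i, zCount L (k+3) 1 ≤ zCount L (k+3) i := hmin
      have hub2 : ∀ i, zCount L (k+3) i ≤ zCount L (k+3) 1 + 1 := hub
      have hq : l / 4 ≤ zCount L (k+3) 1 := by
        have q0 := hub2 0; have q1 := hub2 1; have q2 := hub2 2; have q3 := hub2 3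
        omega
      have c0 : zCount L' (k+3) 0 = zCount L (k+3) 0 := by
        rw [hz' 0, if_neg (by decide)]; omega
      have c1 : zCount L' (k+3) 1 = zCount L (k+3) 1 + 1 := by
        rw [hz' 1, if_pos (by decide)]
      have c2 : zCount L' (k+3) 2 = zCount L (k+3) 2 := by
        rw [hz' 2, if_neg (by decide)]; omega
      have c3 : zCount L' (k+3) 3 = zCount L (k+3) 3 := by
        rw [hz' 3, if_neg (by decide)]; omega
      rw [c0, c1, c2, c3]
      have key := arith_core (k+3) (l/4) (zCount L (k+3) 1) (zCount L (k+3) 0)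
        (zCount L (k+3) 3) (zCount L (k+3) 2) hm ε hε.1 hε.2 hl hq
        (hmin2 0) (hub2 0) (hmin2 3) (hub2 3) (hmin2 2) (hub2 2)
      rw [E1, E2] at key
      have hstep := step_lemma k l _ _ _ _ (by omega)
        (lt_of_le_of_lt (le_of_eq (by unfold phiExpr; ring)) hlt) key
      exact lt_of_le_of_lt (le_of_eq (by unfold phiExpr; ring)) hstep
    · -- t = 2
      have hmin2 : ∀ i, zCount L (k+3) 2 ≤ zCount L (k+3) i := hmin
      have hub2 : ∀ i, zCount L (k+3) i ≤ zCount L (k+3) 2 + 1 := hub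
      have hq : l / 4 ≤ zCount L (k+3) 2 := by
        have q0 := hub2 0; have q1 := hub2 1; have q2 := hub2 2; have q3 := hub2 3
        omega
      have c0 : zCount L' (k+3) 0 = zCount L (k+3) 0 := by
        rw [hz' 0, if_neg (by decide)]; omega
      have c1 : zCount L' (k+3) 1 = zCount L (k+3) 1 := by
        rw [hz' 1, if_neg (by decide)]; omega
      have c2 : zCount L' (k+3) 2 = zCount L (k+3) 2 + 1 := by
        rw [hz' 2, if_pos (by decide)]
      have c3 : zCount L' (k+3) 3 = zCount L (k+3) 3 := by
        rw [hz' 3, if_neg (by decide)]; omega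
      rw [c0, c1, c2, c3]
      have key := arith_core (k+3) (l/4) (zCount L (k+3) 2) (zCount L (k+3) 3)
        (zCount L (k+3) 0) (zCount L (k+3) 1) hm ε hε.1 hε.2 hl hq
        (hmin2 3) (hub2 3) (hmin2 0) (hub2 0) (hmin2 1) (hub2 1)
      rw [E1, E2] at key
      have hstep := step_lemma k l _ _ _ _ (by omega)
        (lt_of_le_of_lt (le_of_eq (by unfold phiExpr; ring)) hlt) key
      exact lt_of_le_of_lt (le_of_eq (by unfold phiExpr; ring)) hstep
    · -- t = 3
      have hmin2 : ∀ i, zCount L (k+3) 3 ≤ zCount L (k+3) i := hmin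
      have hub2 : ∀ i, zCount L (k+3) i ≤ zCount L (k+3) 3 + 1 := hub
      have hq : l / 4 ≤ zCount L (k+3) 3 := by
        have q0 := hub2 0; have q1 := hub2 1; have q2 := hub2 2; have q3 := hub2 3
        omega
      have c0 : zCount L' (k+3) 0 = zCount L (k+3) 0 := by
        rw [hz' 0, if_neg (by decide)]; omega
      have c1 : zCount L' (k+3) 1 = zCount L (k+3) 1 := by
        rw [hz' 1, if_neg (by decide)]; omega
      have c2 : zCount L' (k+3) 2 = zCount L (k+3) 2 := by
        rw [hz' 2, if_neg (by decide)]; omega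
      have c3 : zCount L' (k+3) 3 = zCount L (k+3) 3 + 1 := by
        rw [hz' 3, if_pos (by decide)]
      rw [c0, c1, c2, c3]
      have key := arith_core (k+3) (l/4) (zCount L (k+3) 3) (zCount L (k+3) 2)
        (zCount L (k+3) 1) (zCount L (k+3) 0) hm ε hε.1 hε.2 hl hq
        (hmin2 2) (hub2 2) (hmin2 1) (hub2 1) (hmin2 0) (hub2 0)
      rw [E1, E2] at key
      have hstep := step_lemma k l _ _ _ _ (by omega)
        (lt_of_le_of_lt (le_of_eq (by unfold phiExpr; ring)) hlt) key
      exact lt_of_le_of_lt (le_of_eq (by unfold phiExpr; ring)) hstep
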